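/- arXiv:2604.23928 — 2 statements merged into one kernel-verified Lean document; each statement's English description precedes it below -/
import Mathlib

section
/- The function D₁ is a metric on the space 𝔑(S) of finite counting measures on S, and for all μ₁, μ₂ ∈ 𝔑(S) it satisfies D₁(μ₁, μ₂) ≤ (|μ₁| ∨ |μ₂|) · (diam(S) + α). -/
open Metric

noncomputable section

variable {X : Type*} [MetricSpace X]

/-- Cost of a given elementwise pairing of two lists of points. -/
def pairCost (l₁ l₂ : List X) : ℝ := ((l₁.zip l₂).map fun p => dist p.1 p.2).sum

/-- The first-moment Wasserstein matching distance between two finite counting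
measures (encoded as multisets) of equal cardinality: the minimum, over all ways
of pairing the points, of the sum of pairwise distances. -/
def Dw (μ ν : Multiset X) : ℝ :=
  sInf { r : ℝ | ∃ l₁ l₂ : List X, (l₁ : Multiset X) = μ ∧ (l₂ : Multiset X) = ν ∧
    r = pairCost l₁ l₂ }

/-- The distance `D₁` between finite counting measures: the measure with fewer points
is padded with copies of the auxiliary point `sα`, and then the optimal matching cost
is taken. -/
def D1 (sα : X) (μ₁ μ₂ : Multiset X) : ℝ :=
  Dw (μ₁ + Multiset.replicate (μ₂.card - μ₁.card) sα)
     (μ₂ + Multiset.replicate (μ₁.card - μ₂.card) sα)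

open Multiset in
def mcost (P : Multiset (X × X)) : ℝ := (P.map fun p => dist p.1 p.2).sum

lemma mcost_nonneg (P : Multiset (X × X)) : 0 ≤ mcost P := by
  apply Multiset.sum_nonneg
  intro r hr
  obtain ⟨p, -, rfl⟩ := Multiset.mem_map.mp hr
  exact dist_nonneg

lemma mcost_cons (p : X × X) (P : Multiset (X × X)) :
    mcost (p ::ₘ P) = dist p.1 p.2 + mcost P := by simp [mcost]

lemma mcost_erase [DecidableEq (X × X)] {P : Multiset (X × X)} {p : X × X} (hp : p ∈ P) :
    mcost P = dist p.1 p.2 + mcost (P.erase p) := by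
  conv_lhs => rw [← Multiset.cons_erase hp]
  exact mcost_cons _ _

lemma pairCost_nonneg (l₁ l₂ : List X) : 0 ≤ pairCost l₁ l₂ := by
  apply List.sum_nonneg
  intro r hr
  obtain ⟨p, -, rfl⟩ := List.mem_map.mp hr
  exact dist_nonneg

lemma pairCost_comm (l₁ l₂ : List X) : pairCost l₁ l₂ = pairCost l₂ l₁ := by
  unfold pairCost
  rw [← List.zip_swap l₂ l₁, List.map_map]
  congr 1
  ext p
  simp [dist_comm]

lemma pairCost_self (l : List X) : pairCost l l = 0 := by
  induction l with
  | nil => simp [pairCost]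
  | cons a t ih => simpa [pairCost, List.zip_cons_cons] using ih

lemma lists_finite (μ : Multiset X) : {l : List X | (l : Multiset X) = μ}.Finite := by
  apply Set.Finite.subset (μ.toList.permutations.finite_toSet)
  intro l hl
  simp only [Set.mem_setOf_eq] at hl
  have : (l : Multiset X) = (μ.toList : Multiset X) := by rw [hl, Multiset.coe_toList]
  exact List.mem_permutations.mpr (Multiset.coe_eq_coe.mp this)

lemma DwSet_eq (μ ν : Multiset X) :
    { r : ℝ | ∃ l₁ l₂ : List X, (l₁ : Multiset X) = μ ∧ (l₂ : Multiset X) = ν ∧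
      r = pairCost l₁ l₂ } =
    (fun pr : List X × List X => pairCost pr.1 pr.2) ''
      ({l : List X | (l : Multiset X) = μ} ×ˢ {l : List X | (l : Multiset X) = ν}) := by
  ext r
  constructor
  · rintro ⟨l₁, l₂, h₁, h₂, rfl⟩
    exact ⟨(l₁, l₂), ⟨h₁, h₂⟩, rfl⟩
  · rintro ⟨⟨l₁, l₂⟩, ⟨h₁, h₂⟩, rfl⟩
    exact ⟨l₁, l₂, h₁, h₂, rfl⟩

lemma DwSet_nonempty (μ ν : Multiset X) :
    { r : ℝ | ∃ l₁ l₂ : List X, (l₁ : Multiset X) = μ ∧ (l₂ : Multiset X) = ν ∧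
      r = pairCost l₁ l₂ }.Nonempty :=
  ⟨pairCost μ.toList ν.toList, μ.toList, ν.toList, μ.coe_toList, ν.coe_toList, rfl⟩

lemma DwSet_bddBelow (μ ν : Multiset X) :
    BddBelow { r : ℝ | ∃ l₁ l₂ : List X, (l₁ : Multiset X) = μ ∧ (l₂ : Multiset X) = ν ∧
      r = pairCost l₁ l₂ } := by
  refine ⟨0, ?_⟩
  rintro r ⟨l₁, l₂, -, -, rfl⟩
  exact pairCost_nonneg l₁ l₂

lemma Dw_nonneg (μ ν : Multiset X) : 0 ≤ Dw μ ν := by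
  apply Real.sInf_nonneg
  rintro r ⟨l₁, l₂, -, -, rfl⟩
  exact pairCost_nonneg l₁ l₂

lemma Dw_le (μ ν : Multiset X) {l₁ l₂ : List X} (h₁ : (l₁ : Multiset X) = μ)
    (h₂ : (l₂ : Multiset X) = ν) : Dw μ ν ≤ pairCost l₁ l₂ :=
  csInf_le (DwSet_bddBelow μ ν) ⟨l₁, l₂, h₁, h₂, rfl⟩

lemma Dw_exists (μ ν : Multiset X) : ∃ l₁ l₂ : List X,
    (l₁ : Multiset X) = μ ∧ (l₂ : Multiset X) = ν ∧ Dw μ ν = pairCost l₁ l₂ := by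
  have hfin : { r : ℝ | ∃ l₁ l₂ : List X, (l₁ : Multiset X) = μ ∧ (l₂ : Multiset X) = ν ∧
      r = pairCost l₁ l₂ }.Finite := by
    rw [DwSet_eq]
    exact Set.Finite.image _ ((lists_finite μ).prod (lists_finite ν))
  have := (DwSet_nonempty μ ν).csInf_mem hfin
  exact this

lemma Dw_symm (μ ν : Multiset X) : Dw μ ν = Dw ν μ := by
  unfold Dw
  congr 1
  ext r
  constructor
  · rintro ⟨l₁, l₂, h₁, h₂, rfl⟩
    exact ⟨l₂, l₁, h₂, h₁, (pairCost_comm l₁ l₂)⟩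
  · rintro ⟨l₁, l₂, h₁, h₂, rfl⟩
    exact ⟨l₂, l₁, h₂, h₁, (pairCost_comm l₁ l₂)⟩

lemma Dw_self (μ : Multiset X) : Dw μ μ = 0 :=
  le_antisymm (by simpa [pairCost_self] using Dw_le μ μ μ.coe_toList μ.coe_toList)
    (Dw_nonneg μ μ)

-- couplings
lemma Dw_le_mcost {μ ν : Multiset X} (P : Multiset (X × X))
    (hf : P.map Prod.fst = μ) (hs : P.map Prod.snd = ν) : Dw μ ν ≤ mcost P := by
  obtain ⟨l, hl⟩ := Quot.exists_rep P
  have hl' : (l : Multiset (X × X)) = P := hl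
  subst hl'
  have hzip : (l.map Prod.fst).zip (l.map Prod.snd) = l := by
    rw [List.zip_map']
    simp
  have h1 : ((l.map Prod.fst : List X) : Multiset X) = μ := by
    rw [← hf]; rfl
  have h2 : ((l.map Prod.snd : List X) : Multiset X) = ν := by
    rw [← hs]; rfl
  have : pairCost (l.map Prod.fst) (l.map Prod.snd) = mcost (l : Multiset (X × X)) := by
    unfold pairCost mcost
    rw [hzip]
    rfl
  rw [← this]
  exact Dw_le μ ν h1 h2

lemma exists_coupling {μ ν : Multiset X} (h : μ.card = ν.card) :
    ∃ P : Multiset (X × X), P.map Prod.fst = μ ∧ P.map Prod.snd = ν ∧ mcost P = Dw μ ν := by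
  obtain ⟨l₁, l₂, h₁, h₂, hD⟩ := Dw_exists μ ν
  have hlen : l₁.length = l₂.length := by
    have e1 : l₁.length = μ.card := by rw [← h₁]; rfl
    have e2 : l₂.length = ν.card := by rw [← h₂]; rfl
    omega
  refine ⟨(l₁.zip l₂ : List (X × X)), ?_, ?_, ?_⟩
  · rw [Multiset.map_coe, List.map_fst_zip hlen.le, h₁]
  · rw [Multiset.map_coe, List.map_snd_zip hlen.ge, h₂]
  · rw [hD]; rfl

lemma glue (P : Multiset (X × X)) : ∀ Q : Multiset (X × X),
    P.map Prod.snd = Q.map Prod.fst →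
    ∃ R : Multiset (X × X), R.map Prod.fst = P.map Prod.fst ∧
      R.map Prod.snd = Q.map Prod.snd ∧ mcost R ≤ mcost P + mcost Q := by
  classical
  induction P using Multiset.strongInductionOn with
  | ih P ih =>
    intro Q h
    rcases Multiset.empty_or_exists_mem P with rfl | ⟨p, hp⟩
    · have hQ : Q = 0 := by
        have : Q.map Prod.fst = 0 := by simpa using h.symm
        simpa using this
      subst hQ
      exact ⟨0, by simp, by simp, by simp [mcost]⟩
    · obtain ⟨a, b⟩ := p
      have hb : b ∈ Q.map Prod.fst := by
        rw [← h]
        exact Multiset.mem_map_of_mem _ hp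
      obtain ⟨q, hq', hqb⟩ := Multiset.mem_map.mp hb
      obtain ⟨b2, c⟩ := q
      simp only at hqb
      have hq : (b, c) ∈ Q := by rwa [hqb] at hq'
      clear hq' hqb
      have hstep : (P.erase (a, b)).map Prod.snd = (Q.erase (b, c)).map Prod.fst := by
        rw [Multiset.map_erase_of_mem _ _ hp, Multiset.map_erase_of_mem _ _ hq, h]
      obtain ⟨R, hR1, hR2, hR3⟩ :=
        ih (P.erase (a, b)) (Multiset.erase_lt.mpr hp) (Q.erase (b, c)) hstep
      refine ⟨(a, c) ::ₘ R, ?_, ?_, ?_⟩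
      · rw [Multiset.map_cons, hR1, Multiset.map_erase_of_mem _ _ hp]
        exact Multiset.cons_erase (show (a : X) ∈ P.map Prod.fst from
          Multiset.mem_map_of_mem _ hp)
      · rw [Multiset.map_cons, hR2, Multiset.map_erase_of_mem _ _ hq]
        exact Multiset.cons_erase (show (c : X) ∈ Q.map Prod.snd from
          Multiset.mem_map_of_mem _ hq)
      · have e1 : mcost P = dist a b + mcost (P.erase (a, b)) := mcost_erase hp
        have e2 : mcost Q = dist b c + mcost (Q.erase (b, c)) := mcost_erase hq
        have tri : dist a c ≤ dist a b + dist b c := dist_triangle a b c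
        rw [mcost_cons]
        simp only at e1 e2 ⊢
        linarith

lemma Dw_triangle {μ ν ξ : Multiset X} (h12 : μ.card = ν.card) (h23 : ν.card = ξ.card) :
    Dw μ ξ ≤ Dw μ ν + Dw ν ξ := by
  obtain ⟨P, hPf, hPs, hPc⟩ := exists_coupling h12
  obtain ⟨Q, hQf, hQs, hQc⟩ := exists_coupling h23
  obtain ⟨R, hRf, hRs, hRc⟩ := glue P Q (by rw [hPs, hQf])
  calc Dw μ ξ ≤ mcost R := Dw_le_mcost R (by rw [hRf, hPf]) (by rw [hRs, hQs])
    _ ≤ mcost P + mcost Q := hRc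
    _ = Dw μ ν + Dw ν ξ := by rw [hPc, hQc]

lemma unpad (x : X) {μ ν : Multiset X} (P : Multiset (X × X))
    (hf : P.map Prod.fst = x ::ₘ μ) (hs : P.map Prod.snd = x ::ₘ ν) :
    ∃ P' : Multiset (X × X), P'.map Prod.fst = μ ∧ P'.map Prod.snd = ν ∧
      mcost P' ≤ mcost P := by
  classical
  have hx : x ∈ P.map Prod.fst := by rw [hf]; exact Multiset.mem_cons_self _ _
  obtain ⟨p, hp, hp1⟩ := Multiset.mem_map.mp hx
  obtain ⟨x', b⟩ := p
  simp only at hp1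
  rw [hp1] at hp
  clear hp1
  set Q := P.erase (x, b) with hQdef
  have hQf : Q.map Prod.fst = μ := by
    rw [hQdef, Multiset.map_erase_of_mem _ _ hp, hf]
    simp
  have hQs : Q.map Prod.snd = (x ::ₘ ν).erase b := by
    rw [hQdef, Multiset.map_erase_of_mem _ _ hp, hs]
  have hcostP : mcost P = dist x b + mcost Q := mcost_erase hp
  by_cases hbx : b = x
  · refine ⟨Q, hQf, ?_, ?_⟩
    · rw [hQs, hbx, Multiset.erase_cons_head]
    · have h0 : (0:ℝ) ≤ dist x b := dist_nonneg
      rw [hcostP]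
      linarith
  · have hbmem : b ∈ x ::ₘ ν := by
      rw [← hs]
      exact Multiset.mem_map_of_mem _ hp
    have hbν : b ∈ ν := by
      rcases Multiset.mem_cons.mp hbmem with h' | h'
      · exact absurd h' hbx
      · exact h'
    have hQs' : Q.map Prod.snd = x ::ₘ ν.erase b := by
      rw [hQs]
      exact Multiset.erase_cons_tail ν (Ne.symm hbx)
    have hxQ : x ∈ Q.map Prod.snd := by rw [hQs']; exact Multiset.mem_cons_self _ _
    obtain ⟨q, hq, hq2⟩ := Multiset.mem_map.mp hxQ
    obtain ⟨a, x''⟩ := q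
    simp only at hq2
    rw [hq2] at hq
    clear hq2
    have haμ : a ∈ μ := by
      rw [← hQf]
      exact Multiset.mem_map_of_mem _ hq
    refine ⟨(a, b) ::ₘ (Q.erase (a, x)), ?_, ?_, ?_⟩
    · rw [Multiset.map_cons, Multiset.map_erase_of_mem _ _ hq, hQf]
      exact Multiset.cons_erase haμ
    · rw [Multiset.map_cons, Multiset.map_erase_of_mem _ _ hq, hQs',
        Multiset.erase_cons_head]
      exact Multiset.cons_erase hbν
    · have hQcost : mcost Q = dist a x + mcost (Q.erase (a, x)) := mcost_erase hq
      rw [mcost_cons, hcostP, hQcost]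
      have tri : dist a b ≤ dist a x + dist x b := dist_triangle a x b
      simp only
      linarith

lemma Dw_cons_le (x : X) (μ ν : Multiset X) : Dw (x ::ₘ μ) (x ::ₘ ν) ≤ Dw μ ν := by
  obtain ⟨l₁, l₂, h₁, h₂, hD⟩ := Dw_exists μ ν
  have hc : pairCost (x :: l₁) (x :: l₂) = pairCost l₁ l₂ := by
    simp [pairCost, List.zip_cons_cons]
  have := Dw_le (x ::ₘ μ) (x ::ₘ ν) (l₁ := x :: l₁) (l₂ := x :: l₂)
    (by rw [← Multiset.cons_coe, h₁]) (by rw [← Multiset.cons_coe, h₂])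
  rw [hc] at this
  rw [hD]
  exact this

lemma Dw_le_cons (x : X) {μ ν : Multiset X} (h : μ.card = ν.card) :
    Dw μ ν ≤ Dw (x ::ₘ μ) (x ::ₘ ν) := by
  obtain ⟨P, hPf, hPs, hPc⟩ := exists_coupling (μ := x ::ₘ μ) (ν := x ::ₘ ν) (by simp [h])
  obtain ⟨P', h1, h2, h3⟩ := unpad x P hPf hPs
  calc Dw μ ν ≤ mcost P' := Dw_le_mcost P' h1 h2
    _ ≤ mcost P := h3
    _ = _ := hPc

lemma Dw_rep_le (x : X) (k : ℕ) (μ ν : Multiset X) :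
    Dw (μ + Multiset.replicate k x) (ν + Multiset.replicate k x) ≤ Dw μ ν := by
  induction k with
  | zero => simp
  | succ n ih =>
      have e : ∀ ρ : Multiset X, ρ + Multiset.replicate (n + 1) x
          = x ::ₘ (ρ + Multiset.replicate n x) := by
        intro ρ
        rw [Multiset.replicate_succ, Multiset.add_cons]
      rw [e μ, e ν]
      exact le_trans (Dw_cons_le x _ _) ih

lemma Dw_le_rep (x : X) (k : ℕ) {μ ν : Multiset X} (h : μ.card = ν.card) :
    Dw μ ν ≤ Dw (μ + Multiset.replicate k x) (ν + Multiset.replicate k x) := by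
  induction k with
  | zero => simp
  | succ n ih =>
      have e : ∀ ρ : Multiset X, ρ + Multiset.replicate (n + 1) x
          = x ::ₘ (ρ + Multiset.replicate n x) := by
        intro ρ
        rw [Multiset.replicate_succ, Multiset.add_cons]
      rw [e μ, e ν]
      exact le_trans ih (Dw_le_cons x (by simp [h]))

lemma mcost_zero_pairs (P : Multiset (X × X)) (h : mcost P = 0) :
    ∀ p ∈ P, (p : X × X).1 = p.2 := by
  induction P using Multiset.induction_on with
  | empty => simp
  | cons a s ih =>
    rw [mcost_cons] at h
    have h1 : (0:ℝ) ≤ dist a.1 a.2 := dist_nonneg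
    have h2 : 0 ≤ mcost s := mcost_nonneg s
    have hd : dist a.1 a.2 = 0 := by linarith
    have hs : mcost s = 0 := by linarith
    intro p hp
    rcases Multiset.mem_cons.mp hp with rfl | hp'
    · exact dist_eq_zero.mp hd
    · exact ih hs p hp'

lemma Dw_eq_zero_iff {μ ν : Multiset X} (h : μ.card = ν.card) : Dw μ ν = 0 ↔ μ = ν := by
  constructor
  · intro h0
    obtain ⟨P, hPf, hPs, hPc⟩ := exists_coupling h
    have hc0 : mcost P = 0 := by rw [hPc, h0]
    have hpair := mcost_zero_pairs P hc0
    rw [← hPf, ← hPs]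
    exact Multiset.map_congr rfl fun p hp => hpair p hp
  · rintro rfl
    exact Dw_self μ

lemma key_bound {S : Set X} (hS : IsCompact S) {α : ℝ} (hα : 0 < α) {sα : X}
    (hdist : Metric.infDist sα S = α) {x y : X}
    (hx : x ∈ S ∨ x = sα) (hy : y ∈ S ∨ y = sα) : dist x y ≤ Metric.diam S + α := by
  have hd0 : 0 ≤ Metric.diam S := Metric.diam_nonneg
  have aux : ∀ z ∈ S, dist z sα ≤ Metric.diam S + α := by
    intro z hz
    obtain ⟨w, hw, hwe⟩ := hS.exists_infDist_eq_dist ⟨z, hz⟩ sα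
    calc dist z sα ≤ dist z w + dist w sα := dist_triangle z w sα
      _ ≤ Metric.diam S + α := by
          have h1 : dist z w ≤ Metric.diam S := Metric.dist_le_diam_of_mem hS.isBounded hz hw
          have h2 : dist w sα = α := by rw [dist_comm, ← hwe, hdist]
          linarith
  rcases hx with hx | rfl
  · rcases hy with hy | rfl
    · exact le_trans (Metric.dist_le_diam_of_mem hS.isBounded hx hy) (by linarith)
    · exact aux x hx
  · rcases hy with hy | rfl
    · rw [dist_comm]; exact aux y hy
    · rw [dist_self]; linarith

lemma D1_eq_zero_half {S : Set X} {sα : X} (hsα : sα ∉ S) {μ₁ μ₂ : Multiset X}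
    (hμ₂ : ∀ x ∈ μ₂, x ∈ S) (hle : μ₁.card ≤ μ₂.card)
    (heq : μ₁ + Multiset.replicate (μ₂.card - μ₁.card) sα
      = μ₂ + Multiset.replicate (μ₁.card - μ₂.card) sα) : μ₁ = μ₂ := by
  have h12 : μ₁.card - μ₂.card = 0 := by omega
  rw [h12, Multiset.replicate_zero, add_zero] at heq
  by_cases hk : μ₂.card - μ₁.card = 0
  · rw [hk, Multiset.replicate_zero, add_zero] at heq
    exact heq
  · exfalso
    have : sα ∈ μ₂ := by
      rw [← heq]
      exact Multiset.mem_add.mpr (Or.inr (Multiset.mem_replicate.mpr ⟨hk, rfl⟩))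
    exact hsα (hμ₂ sα this)

lemma D1_eq_zero_iff {S : Set X} {sα : X} (hsα : sα ∉ S) {μ₁ μ₂ : Multiset X}
    (hμ₁ : ∀ x ∈ μ₁, x ∈ S) (hμ₂ : ∀ x ∈ μ₂, x ∈ S) :
    D1 sα μ₁ μ₂ = 0 ↔ μ₁ = μ₂ := by
  constructor
  · intro h0
    have hcard : (μ₁ + Multiset.replicate (μ₂.card - μ₁.card) sα).card
        = (μ₂ + Multiset.replicate (μ₁.card - μ₂.card) sα).card := by
      simp only [Multiset.card_add, Multiset.card_replicate]
      omega
    have heq := (Dw_eq_zero_iff hcard).mp h0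
    rcases le_total μ₁.card μ₂.card with hle | hle
    · exact D1_eq_zero_half hsα hμ₂ hle heq
    · exact (D1_eq_zero_half hsα hμ₁ hle heq.symm).symm
  · rintro rfl
    unfold D1
    exact Dw_self _

lemma D1_symm (sα : X) (μ₁ μ₂ : Multiset X) : D1 sα μ₁ μ₂ = D1 sα μ₂ μ₁ := by
  unfold D1
  exact Dw_symm _ _

lemma D1_triangle (sα : X) (μ₁ μ₂ μ₃ : Multiset X) :
    D1 sα μ₁ μ₃ ≤ D1 sα μ₁ μ₂ + D1 sα μ₂ μ₃ := by
  set c₁ := μ₁.card with hc₁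
  set c₂ := μ₂.card with hc₂
  set c₃ := μ₃.card with hc₃
  set N := max c₁ (max c₂ c₃) with hN
  have hN₁ : c₁ ≤ N := le_max_left _ _
  have hN₂ : c₂ ≤ N := le_trans (le_max_left _ _) (le_max_right _ _)
  have hN₃ : c₃ ≤ N := le_trans (le_max_right _ _) (le_max_right _ _)
  have pad_eq : ∀ (μ : Multiset X) (co : ℕ), μ.card ≤ N → co ≤ N →
      μ + Multiset.replicate (co - μ.card) sα
        + Multiset.replicate (N - max μ.card co) sα
      = μ + Multiset.replicate (N - μ.card) sα := by
    intro μ co h1 h2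
    rw [add_assoc, ← Multiset.replicate_add]
    congr 2
    rcases max_choice μ.card co with h | h <;> rw [h] <;> omega
  have card_pad2 : ∀ (μ ν : Multiset X),
      (μ + Multiset.replicate (ν.card - μ.card) sα).card
      = (ν + Multiset.replicate (μ.card - ν.card) sα).card := by
    intro μ ν
    simp only [Multiset.card_add, Multiset.card_replicate]
    omega
  have card_padN : ∀ μ : Multiset X, μ.card ≤ N →
      (μ + Multiset.replicate (N - μ.card) sα).card = N := by
    intro μ h
    rw [Multiset.card_add, Multiset.card_replicate]
    omega
  have e13 := pad_eq μ₁ c₃ hN₁ hN₃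
  have e31 := pad_eq μ₃ c₁ hN₃ hN₁
  rw [Nat.max_comm c₃ c₁] at e31
  have e12 := pad_eq μ₁ c₂ hN₁ hN₂
  have e21 := pad_eq μ₂ c₁ hN₂ hN₁
  rw [Nat.max_comm c₂ c₁] at e21
  have e23 := pad_eq μ₂ c₃ hN₂ hN₃
  have e32 := pad_eq μ₃ c₂ hN₃ hN₂
  rw [Nat.max_comm c₃ c₂] at e32
  have step13 : D1 sα μ₁ μ₃ ≤ Dw (μ₁ + Multiset.replicate (N - c₁) sα)
      (μ₃ + Multiset.replicate (N - c₃) sα) := by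
    have h := Dw_le_rep sα (N - max c₁ c₃) (card_pad2 μ₁ μ₃)
    rw [e13, e31] at h
    exact h
  have step12 : Dw (μ₁ + Multiset.replicate (N - c₁) sα)
      (μ₂ + Multiset.replicate (N - c₂) sα) ≤ D1 sα μ₁ μ₂ := by
    have h := Dw_rep_le sα (N - max c₁ c₂)
      (μ₁ + Multiset.replicate (c₂ - c₁) sα) (μ₂ + Multiset.replicate (c₁ - c₂) sα)
    rw [e12, e21] at h
    exact h
  have step23 : Dw (μ₂ + Multiset.replicate (N - c₂) sα)
      (μ₃ + Multiset.replicate (N - c₃) sα) ≤ D1 sα μ₂ μ₃ := by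
    have h := Dw_rep_le sα (N - max c₂ c₃)
      (μ₂ + Multiset.replicate (c₃ - c₂) sα) (μ₃ + Multiset.replicate (c₂ - c₃) sα)
    rw [e23, e32] at h
    exact h
  have tri := Dw_triangle (μ := μ₁ + Multiset.replicate (N - c₁) sα)
    (ν := μ₂ + Multiset.replicate (N - c₂) sα)
    (ξ := μ₃ + Multiset.replicate (N - c₃) sα)
    (by rw [card_padN μ₁ hN₁, card_padN μ₂ hN₂])
    (by rw [card_padN μ₂ hN₂, card_padN μ₃ hN₃])
  linarith

lemma D1_bound {S : Set X} (hS : IsCompact S) {α : ℝ} (hα : 0 < α) {sα : X}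
    (hdist : Metric.infDist sα S = α) {μ₁ μ₂ : Multiset X}
    (hμ₁ : ∀ x ∈ μ₁, x ∈ S) (hμ₂ : ∀ x ∈ μ₂, x ∈ S) :
    D1 sα μ₁ μ₂ ≤ (max μ₁.card μ₂.card : ℕ) * (Metric.diam S + α) := by
  set A := μ₁ + Multiset.replicate (μ₂.card - μ₁.card) sα with hA
  set B := μ₂ + Multiset.replicate (μ₁.card - μ₂.card) sα with hB
  have hmemA : ∀ x ∈ A, x ∈ S ∨ x = sα := by
    intro x hx
    rcases Multiset.mem_add.mp hx with h | h
    · exact Or.inl (hμ₁ x h)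
    · exact Or.inr (Multiset.eq_of_mem_replicate h)
  have hmemB : ∀ x ∈ B, x ∈ S ∨ x = sα := by
    intro x hx
    rcases Multiset.mem_add.mp hx with h | h
    · exact Or.inl (hμ₂ x h)
    · exact Or.inr (Multiset.eq_of_mem_replicate h)
  have hDle : D1 sα μ₁ μ₂ ≤ pairCost A.toList B.toList :=
    Dw_le _ _ (Multiset.coe_toList A) (Multiset.coe_toList B)
  refine le_trans hDle ?_
  have hbound : ∀ r ∈ (A.toList.zip B.toList).map (fun p => dist p.1 p.2),
      r ≤ Metric.diam S + α := by
    intro r hr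
    obtain ⟨p, hp, rfl⟩ := List.mem_map.mp hr
    obtain ⟨hp1, hp2⟩ := List.of_mem_zip hp
    exact key_bound hS hα hdist (hmemA _ (Multiset.mem_toList.mp hp1))
      (hmemB _ (Multiset.mem_toList.mp hp2))
  have hsum := List.sum_le_card_nsmul _ (Metric.diam S + α) hbound
  have hlen : ((A.toList.zip B.toList).map (fun p => dist p.1 p.2)).length
      = max μ₁.card μ₂.card := by
    rw [List.length_map, List.length_zip, Multiset.length_toList, Multiset.length_toList,
      hA, hB]
    simp only [Multiset.card_add, Multiset.card_replicate]
    omega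
  rw [hlen] at hsum
  unfold pairCost
  calc ((A.toList.zip B.toList).map fun p => dist p.1 p.2).sum
      ≤ (max μ₁.card μ₂.card) • (Metric.diam S + α) := hsum
    _ = (max μ₁.card μ₂.card : ℕ) * (Metric.diam S + α) := nsmul_eq_mul _ _

/-- On a compact metric space `S` (sitting inside an ambient metric
space `X` which also contains the auxiliary point `sα`, at infimum distance `α > 0`
from `S`), the function `D₁` is a metric on the space `𝔑(S)` of finite counting
measures supported in `S` (nonnegative, zero exactly on the diagonal, symmetric,
satisfying the triangle inequality), and it satisfies the bound
`D₁(μ₁, μ₂) ≤ (|μ₁| ⊔ |μ₂|) * (diam S + α)`. -/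
theorem stmt0 (S : Set X) (hS : IsCompact S) (α : ℝ) (hα : 0 < α)
    (sα : X) (hsα : sα ∉ S) (hdist : Metric.infDist sα S = α) :
    (∀ μ₁ μ₂ : Multiset X, (∀ x ∈ μ₁, x ∈ S) → (∀ x ∈ μ₂, x ∈ S) →
      0 ≤ D1 sα μ₁ μ₂ ∧
      (D1 sα μ₁ μ₂ = 0 ↔ μ₁ = μ₂) ∧
      D1 sα μ₁ μ₂ = D1 sα μ₂ μ₁ ∧
      D1 sα μ₁ μ₂ ≤ (max μ₁.card μ₂.card : ℕ) * (Metric.diam S + α)) ∧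
    (∀ μ₁ μ₂ μ₃ : Multiset X,
      (∀ x ∈ μ₁, x ∈ S) → (∀ x ∈ μ₂, x ∈ S) → (∀ x ∈ μ₃, x ∈ S) →
      D1 sα μ₁ μ₃ ≤ D1 sα μ₁ μ₂ + D1 sα μ₂ μ₃) := by
  constructor
  · intro μ₁ μ₂ h₁ h₂
    refine ⟨?_, D1_eq_zero_iff hsα h₁ h₂, D1_symm sα μ₁ μ₂, D1_bound hS hα hdist h₁ h₂⟩
    unfold D1
    exact Dw_nonneg _ _
  · intro μ₁ μ₂ μ₃ _ _ _
    exact D1_triangle sα μ₁ μ₂ μ₃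
end
end

section
/- Let S = [0,T] with the Euclidean metric and s_α = T + α. Let μ₁ = ∑_{i=1}^n δ_{x_i} and μ₂ = ∑_{i=1}^m δ_{y_i} with n ≤ m, and set μ₁* = μ₁ + ∑_{i=n+1}^m δ_{s_α}. For a counting measure μ with |μ| = m, define F_μ(t) = μ([0,t])/m for t ≥ 0 and let F_μ^{-1}(u) = inf{t ≥ 0 : F_μ(t) ≥ u} for 0 < u < 1. Then D₁(μ₁,μ₂) = m ∫₀¹ |F_{μ₁*}^{-1}(u) − F_{μ₂}^{-1}(u)| du = m ∫₀^∞ |F_{μ₁*}(x) − F_{μ₂}(x)| dx. -/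
open Metric MeasureTheory

noncomputable section

variable {X : Type*} [MetricSpace X]

open Classical in
/-- `F_μ(t) = μ([0,t])/m`, the cumulative distribution function of the
normalized counting measure `μ/m` on the half line. -/
def Fcdf (μ : Multiset ℝ) (m : ℕ) (t : ℝ) : ℝ :=
  ((μ.filter (fun x => x ∈ Set.Icc (0:ℝ) t)).card : ℝ) / m

/-- `F_μ⁻¹(u) = inf {t ≥ 0 : F_μ(t) ≥ u}`, the corresponding quantile function. -/
def Finv (μ : Multiset ℝ) (m : ℕ) (u : ℝ) : ℝ :=
  sInf {t : ℝ | 0 ≤ t ∧ u ≤ Fcdf μ m t}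

def ind (a : ℝ) : ℝ → ℝ := (Set.Icc (0:ℝ) a).indicator (fun _ => (1:ℝ))

lemma ind_eq_of_le (a b : ℝ) (ha : 0 ≤ a) (h : a ≤ b) (t : ℝ) :
    |ind a t - ind b t| = (Set.Ioc a b).indicator (fun _ => (1:ℝ)) t := by
  simp only [ind, Set.indicator_apply, Set.mem_Icc, Set.mem_Ioc]
  split_ifs <;> simp_all <;> linarith

lemma ind_eq (a b : ℝ) (ha : 0 ≤ a) (hb : 0 ≤ b) (t : ℝ) :
    |ind a t - ind b t| = (Set.Ioc (min a b) (max a b)).indicator (fun _ => (1:ℝ)) t := by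
  rcases le_total a b with h | h
  · rw [min_eq_left h, max_eq_right h]; exact ind_eq_of_le a b ha h t
  · rw [min_eq_right h, max_eq_left h, abs_sub_comm]; exact ind_eq_of_le b a hb h t

lemma ind_integrable (a : ℝ) : IntegrableOn (ind a) (Set.Ioi (0:ℝ)) := by
  refine Integrable.integrableOn ?_
  rw [ind, integrable_indicator_iff measurableSet_Icc]
  exact integrableOn_const measure_Icc_lt_top.ne

lemma ind_abs_integrable (a b : ℝ) (ha : 0 ≤ a) (hb : 0 ≤ b) :
    IntegrableOn (fun t => |ind a t - ind b t|) (Set.Ioi (0:ℝ)) :=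
  (((ind_integrable a).sub (ind_integrable b)).abs)

lemma ind_abs_integral (a b : ℝ) (ha : 0 ≤ a) (hb : 0 ≤ b) :
    ∫ t in Set.Ioi (0:ℝ), |ind a t - ind b t| = |a - b| := by
  have : ∀ t, |ind a t - ind b t| = (Set.Ioc (min a b) (max a b)).indicator (fun _ => (1:ℝ)) t :=
    ind_eq a b ha hb
  rw [MeasureTheory.integral_congr_ae (Filter.Eventually.of_forall this)]
  rw [MeasureTheory.setIntegral_indicator measurableSet_Ioc]
  have hsub : Set.Ioi (0:ℝ) ∩ Set.Ioc (min a b) (max a b) = Set.Ioc (min a b) (max a b) := by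
    refine Set.inter_eq_right.2 fun t ht => ?_
    have := ht.1
    have : (0:ℝ) ≤ min a b := le_min ha hb
    exact lt_of_le_of_lt this ht.1
  rw [hsub, MeasureTheory.setIntegral_const, Real.volume_real_Ioc, smul_eq_mul, mul_one,
    max_eq_left (by rw [sub_nonneg]; exact min_le_max), max_sub_min_eq_abs, abs_sub_comm]
def Sfun (μ : Multiset ℝ) (t : ℝ) : ℝ := (μ.map (fun a => ind a t)).sum

lemma pairCost_eq (l₁ l₂ : List ℝ) (h : l₁.length = l₂.length) :
    pairCost l₁ l₂ = ∑ i : Fin l₁.length, |l₁.get i - l₂.get (Fin.cast h i)| := by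
  have hml : ((l₁.zip l₂).map fun p => dist p.1 p.2) =
      List.ofFn (fun i : Fin l₁.length => |l₁.get i - l₂.get (Fin.cast h i)|) := by
    apply List.ext_getElem
    · simp [List.length_zip, h]
    · intro i h1 h2
      simp only [List.getElem_map, List.getElem_zip, List.getElem_ofFn, Real.dist_eq]
      rfl
  rw [pairCost, hml, List.sum_ofFn]

lemma Sfun_coe (l : List ℝ) (t : ℝ) :
    Sfun (↑l) t = ∑ i : Fin l.length, ind (l.get i) t := by
  have : l.map (fun a => ind a t) = List.ofFn (fun i : Fin l.length => ind (l.get i) t) := by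
    conv_lhs => rw [← List.ofFn_get l, List.map_ofFn]
    rfl
  rw [Sfun, Multiset.map_coe, Multiset.sum_coe, this, List.sum_ofFn]

lemma Sfun_integrable (l : List ℝ) : IntegrableOn (Sfun ↑l) (Set.Ioi (0:ℝ)) := by
  have : IntegrableOn (fun t => ∑ i : Fin l.length, ind (l.get i) t) (Set.Ioi (0:ℝ)) := by
    apply MeasureTheory.integrable_finset_sum
    intro i _
    refine Integrable.integrableOn ?_
    rw [ind, integrable_indicator_iff measurableSet_Icc]
    exact integrableOn_const measure_Icc_lt_top.ne
  exact this.congr_fun (fun t _ => (Sfun_coe l t).symm) measurableSet_Ioi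

lemma ind_pos (a b t : ℝ) (h : 0 < ind a t - ind b t) : t ∈ Set.Icc 0 a ∧ t ∉ Set.Icc 0 b := by
  simp only [ind, Set.indicator_apply] at h
  split_ifs at h <;> norm_num at h <;> tauto

lemma sum_abs_eq_abs_sum (l₁ l₂ : List ℝ) (h : l₁.length = l₂.length)
    (s₁ : l₁.Pairwise (· ≤ ·)) (s₂ : l₂.Pairwise (· ≤ ·)) (t : ℝ) :
    ∑ i : Fin l₁.length, |ind (l₁.get i) t - ind (l₂.get (Fin.cast h i)) t|
      = |∑ i : Fin l₁.length, (ind (l₁.get i) t - ind (l₂.get (Fin.cast h i)) t)| := by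
  set c : Fin l₁.length → ℝ := fun i => ind (l₁.get i) t - ind (l₂.get (Fin.cast h i)) t with hc
  have sign : (∀ i, 0 ≤ c i) ∨ (∀ i, c i ≤ 0) := by
    by_contra hcon
    push_neg at hcon
    obtain ⟨⟨i, hi⟩, ⟨j, hj⟩⟩ := hcon
    have hi' := ind_pos _ _ t (by simpa [hc] using neg_pos.mpr hi)
    have hj' := ind_pos _ _ t (by simpa [hc] using hj)
    simp only [Set.mem_Icc, not_and, not_le] at hi' hj'
    have ht0 : 0 ≤ t := hj'.1.1
    have hbi := hi'.2 ht0
    have hbj := hj'.2 ht0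
    rcases le_total i j with hij | hij
    · have h2 : l₂.get (Fin.cast h i) ≤ l₂.get (Fin.cast h j) :=
        s₂.rel_get_of_le (by simpa using hij)
      simp only [List.get_eq_getElem, Fin.coe_cast] at h2
      linarith [hi'.1.2]
    · have h2 : l₁.get j ≤ l₁.get i := s₁.rel_get_of_le hij
      simp only [List.get_eq_getElem] at h2
      linarith [hj'.1.2]
  rcases sign with hs | hs
  · rw [abs_of_nonneg (Finset.sum_nonneg fun i _ => hs i)]
    exact Finset.sum_congr rfl fun i _ => abs_of_nonneg (hs i)
  · rw [abs_of_nonpos (Finset.sum_nonpos fun i _ => hs i), ← Finset.sum_neg_distrib]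
    exact Finset.sum_congr rfl fun i _ => abs_of_nonpos (hs i)

lemma step1 (l₁ l₂ : List ℝ) (h : l₁.length = l₂.length)
    (h₁ : ∀ a ∈ l₁, 0 ≤ a) (h₂ : ∀ a ∈ l₂, 0 ≤ a) :
    ∫ t in Set.Ioi (0:ℝ),
        ∑ i : Fin l₁.length, |ind (l₁.get i) t - ind (l₂.get (Fin.cast h i)) t|
      = pairCost l₁ l₂ := by
  rw [pairCost_eq l₁ l₂ h,
    MeasureTheory.integral_finset_sum _
      (fun i _ => ind_abs_integrable _ _ (h₁ _ (l₁.get_mem i)) (h₂ _ (l₂.get_mem _)))]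
  exact Finset.sum_congr rfl fun i _ =>
    ind_abs_integral _ _ (h₁ _ (l₁.get_mem i)) (h₂ _ (l₂.get_mem _))

lemma Sfun_sub (l₁ l₂ : List ℝ) (h : l₁.length = l₂.length) (t : ℝ) :
    Sfun ↑l₁ t - Sfun ↑l₂ t
      = ∑ i : Fin l₁.length, (ind (l₁.get i) t - ind (l₂.get (Fin.cast h i)) t) := by
  rw [Sfun_coe, Sfun_coe, Finset.sum_sub_distrib]
  congr 1
  exact (Fintype.sum_equiv (finCongr h) _ _ (fun i => rfl)).symm

lemma integral_le_pairCost (l₁ l₂ : List ℝ) (h : l₁.length = l₂.length)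
    (h₁ : ∀ a ∈ l₁, 0 ≤ a) (h₂ : ∀ a ∈ l₂, 0 ≤ a) :
    ∫ t in Set.Ioi (0:ℝ), |Sfun ↑l₁ t - Sfun ↑l₂ t| ≤ pairCost l₁ l₂ := by
  rw [← step1 l₁ l₂ h h₁ h₂]
  have hint : IntegrableOn (fun t => |Sfun ↑l₁ t - Sfun ↑l₂ t|) (Set.Ioi (0:ℝ)) :=
    ((Sfun_integrable l₁).sub (Sfun_integrable l₂)).abs
  apply MeasureTheory.integral_mono hint
    (MeasureTheory.integrable_finset_sum _
      (fun i _ => ind_abs_integrable _ _ (h₁ _ (l₁.get_mem i)) (h₂ _ (l₂.get_mem _))))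
  intro t
  simp only []
  rw [Sfun_sub l₁ l₂ h]
  exact (Finset.abs_sum_le_sum_abs _ _).trans (le_of_eq (Finset.sum_congr rfl fun i _ => rfl))

lemma pairCost_sorted_eq (l₁ l₂ : List ℝ) (h : l₁.length = l₂.length)
    (s₁ : l₁.Pairwise (· ≤ ·)) (s₂ : l₂.Pairwise (· ≤ ·))
    (h₁ : ∀ a ∈ l₁, 0 ≤ a) (h₂ : ∀ a ∈ l₂, 0 ≤ a) :
    pairCost l₁ l₂ = ∫ t in Set.Ioi (0:ℝ), |Sfun ↑l₁ t - Sfun ↑l₂ t| := by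
  rw [← step1 l₁ l₂ h h₁ h₂]
  apply MeasureTheory.integral_congr_ae (Filter.Eventually.of_forall ?_)
  intro t
  rw [Sfun_sub l₁ l₂ h]
  exact sum_abs_eq_abs_sum l₁ l₂ h s₁ s₂ t


lemma Dw_eq (μ ν : Multiset ℝ) (h : Multiset.card μ = Multiset.card ν)
    (h₁ : ∀ a ∈ μ, 0 ≤ a) (h₂ : ∀ a ∈ ν, 0 ≤ a) :
    Dw μ ν = ∫ t in Set.Ioi (0:ℝ), |Sfun μ t - Sfun ν t| := by
  set l₁ := μ.sort (· ≤ ·) with hl₁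
  set l₂ := ν.sort (· ≤ ·) with hl₂
  have e₁ : (↑l₁ : Multiset ℝ) = μ := μ.sort_eq _
  have e₂ : (↑l₂ : Multiset ℝ) = ν := ν.sort_eq _
  have lb : ∀ r ∈ { r : ℝ | ∃ l₁ l₂ : List ℝ, (l₁ : Multiset ℝ) = μ ∧ (l₂ : Multiset ℝ) = ν ∧
      r = pairCost l₁ l₂ }, (∫ t in Set.Ioi (0:ℝ), |Sfun μ t - Sfun ν t|) ≤ r := by
    rintro r ⟨l₁', l₂', e₁', e₂', rfl⟩
    have hlen : l₁'.length = l₂'.length := by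
      rw [← e₁', ← e₂'] at h; simpa using h
    have := integral_le_pairCost l₁' l₂' hlen
      (fun a ha => h₁ a (e₁' ▸ (Multiset.mem_coe.2 ha)))
      (fun a ha => h₂ a (e₂' ▸ (Multiset.mem_coe.2 ha)))
    rwa [e₁', e₂'] at this
  have hmem : (∫ t in Set.Ioi (0:ℝ), |Sfun μ t - Sfun ν t|) ∈
      { r : ℝ | ∃ l₁ l₂ : List ℝ, (l₁ : Multiset ℝ) = μ ∧ (l₂ : Multiset ℝ) = ν ∧
        r = pairCost l₁ l₂ } := by
    refine ⟨l₁, l₂, e₁, e₂, ?_⟩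
    have hlen : l₁.length = l₂.length := by
      rw [← Multiset.coe_card l₁, ← Multiset.coe_card l₂, e₁, e₂]; exact h
    rw [pairCost_sorted_eq l₁ l₂ hlen (μ.pairwise_sort _) (ν.pairwise_sort _)
      (fun a ha => h₁ a (e₁ ▸ Multiset.mem_coe.2 ha))
      (fun a ha => h₂ a (e₂ ▸ Multiset.mem_coe.2 ha)), e₁, e₂]
  exact le_antisymm (csInf_le ⟨_, lb⟩ hmem) (le_csInf ⟨_, hmem⟩ lb)


lemma Sfun_count (μ : Multiset ℝ) (t : ℝ) (ht : 0 < t) (htμ : t ∉ μ)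
    (h₁ : ∀ a ∈ μ, 0 ≤ a) [DecidablePred fun x => x ∈ Set.Icc (0:ℝ) t] :
    Sfun μ t = (Multiset.card μ : ℝ) -
      ((μ.filter (fun x => x ∈ Set.Icc (0:ℝ) t)).card : ℝ) := by
  induction μ using Multiset.induction with
  | empty => simp [Sfun]
  | cons a s ih =>
    have hta : t ≠ a := fun e => htμ (e ▸ Multiset.mem_cons_self a s)
    have hts : t ∉ s := fun hs => htμ (Multiset.mem_cons_of_mem hs)
    have ha : 0 ≤ a := h₁ a (Multiset.mem_cons_self a s)
    have ihs := ih hts (fun b hb => h₁ b (Multiset.mem_cons_of_mem hb))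
    have hSf : Sfun (a ::ₘ s) t = ind a t + Sfun s t := by
      rw [Sfun, Multiset.map_cons, Multiset.sum_cons]; rfl
    have hia : ind a t = 1 - (if a ∈ Set.Icc (0:ℝ) t then (1:ℝ) else 0) := by
      simp only [ind, Set.indicator_apply, Set.mem_Icc]
      rcases lt_trichotomy a t with hlt | heq | hgt
      · rw [if_neg (by intro hc; linarith [hc.2]), if_pos ⟨ha, le_of_lt hlt⟩]; norm_num
      · exact absurd heq.symm hta
      · rw [if_pos ⟨le_of_lt ht, le_of_lt hgt⟩, if_neg (by intro hc; linarith [hc.2])]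
        norm_num
    rw [hSf, hia, ihs, Multiset.filter_cons, Multiset.card_cons]
    by_cases hc : a ∈ Set.Icc (0:ℝ) t <;>
      simp [hc, Multiset.card_add] <;> push_cast <;> ring

lemma abs_Sfun_sub_eq (μ ν : Multiset ℝ) (m : ℕ) (hm : 0 < m)
    (hμ : Multiset.card μ = m) (hν : Multiset.card ν = m)
    (h₁ : ∀ a ∈ μ, 0 ≤ a) (h₂ : ∀ a ∈ ν, 0 ≤ a)
    (t : ℝ) (ht : 0 < t) (htμ : t ∉ μ) (htν : t ∉ ν) :
    |Sfun μ t - Sfun ν t| = m * |Fcdf μ m t - Fcdf ν m t| := by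
  classical
  have hmr : (m:ℝ) ≠ 0 := Nat.cast_ne_zero.2 hm.ne'
  have e1 := Sfun_count μ t ht htμ h₁
  have e2 := Sfun_count ν t ht htν h₂
  rw [e1, e2, hμ, hν, Fcdf, Fcdf]
  rw [abs_sub_comm, ← abs_of_pos (show (0:ℝ) < m by positivity), ← abs_mul]
  congr 1
  field_simp
  rw [abs_of_pos (show (0:ℝ) < m by positivity)]; ring

lemma integral_Sfun_eq (μ ν : Multiset ℝ) (m : ℕ) (hm : 0 < m)
    (hμ : Multiset.card μ = m) (hν : Multiset.card ν = m)
    (h₁ : ∀ a ∈ μ, 0 ≤ a) (h₂ : ∀ a ∈ ν, 0 ≤ a) :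
    ∫ t in Set.Ioi (0:ℝ), |Sfun μ t - Sfun ν t|
      = m * ∫ t in Set.Ioi (0:ℝ), |Fcdf μ m t - Fcdf ν m t| := by
  have hfin : ({t : ℝ | t ∈ μ ∨ t ∈ ν}).Finite := by
    apply Set.Finite.subset ((μ.toFinset ∪ ν.toFinset).finite_toSet)
    intro t ht
    simpa [Multiset.mem_toFinset] using ht
  have h2 : ∀ᵐ t ∂(volume : Measure ℝ), ¬(t ∈ μ ∨ t ∈ ν) := by
    rw [MeasureTheory.ae_iff]
    have : {a : ℝ | ¬¬(a ∈ μ ∨ a ∈ ν)} = {t : ℝ | t ∈ μ ∨ t ∈ ν} := by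
      ext a; simp [not_not]; tauto
    rw [this]
    exact hfin.measure_zero volume
  have hae : ∀ᵐ t ∂(volume.restrict (Set.Ioi (0:ℝ))),
      |Sfun μ t - Sfun ν t| = m * |Fcdf μ m t - Fcdf ν m t| := by
    filter_upwards [MeasureTheory.ae_restrict_mem measurableSet_Ioi,
      MeasureTheory.ae_restrict_of_ae h2] with t ht hmem
    push_neg at hmem
    exact abs_Sfun_sub_eq μ ν m hm hμ hν h₁ h₂ t ht hmem.1 hmem.2
  rw [MeasureTheory.integral_congr_ae hae, MeasureTheory.integral_const_mul]

lemma getElem_mem_drop (l : List ℝ) (i : ℕ) (hi : i < l.length) : l[i] ∈ l.drop i := by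
  rw [List.drop_eq_getElem_cons hi]; exact List.mem_cons_self

lemma le_get_of_mem_take (l : List ℝ) (hs : l.Pairwise (· ≤ ·)) (i : ℕ) (hi : i < l.length)
    (a : ℝ) (ha : a ∈ l.take (i+1)) : a ≤ l[i] := by
  rw [List.take_succ] at ha
  rw [List.mem_append] at ha
  rcases ha with ha | ha
  · exact hs.rel_of_mem_take_of_mem_drop ha (getElem_mem_drop l i hi)
  · simp [List.getElem?_eq_getElem hi] at ha
    exact le_of_eq ha

lemma get_le_of_mem_drop (l : List ℝ) (hs : l.Pairwise (· ≤ ·)) (i : ℕ) (hi : i < l.length)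
    (a : ℝ) (ha : a ∈ l.drop i) : l[i] ≤ a := by
  rw [List.drop_eq_getElem_cons hi] at ha
  rcases List.mem_cons.1 ha with rfl | ha
  · exact le_refl _
  · exact hs.rel_of_mem_take_of_mem_drop
      (by rw [List.take_succ]; exact List.mem_append.2 (Or.inr (by simp [List.getElem?_eq_getElem hi])))
      ha

lemma card_filter_ge (l : List ℝ) (hs : l.Pairwise (· ≤ ·)) (h₁ : ∀ a ∈ l, 0 ≤ a)
    (i : ℕ) (hi : i < l.length) (t : ℝ) (hti : l[i]'hi ≤ t)
    [DecidablePred fun x : ℝ => x ∈ Set.Icc (0:ℝ) t] :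
    i + 1 ≤ Multiset.card ((↑l : Multiset ℝ).filter (fun x => x ∈ Set.Icc (0:ℝ) t)) := by
  have hlen : (l.take (i+1)).length = i + 1 := by rw [List.length_take]; omega
  have h1 : (l.take (i+1)).countP (fun x => decide (x ∈ Set.Icc (0:ℝ) t)) = i + 1 := by
    rw [List.countP_eq_length.2, hlen]
    intro a ha
    exact decide_eq_true (Set.mem_Icc.2 ⟨h₁ a (List.mem_of_mem_take ha),
      le_trans (le_get_of_mem_take l hs i hi a ha) hti⟩)
  have h2 := (List.take_sublist (i+1) l).countP_le
    (p := fun x => decide (x ∈ Set.Icc (0:ℝ) t))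
  rw [h1] at h2
  simpa [Multiset.filter_coe, List.countP_eq_length_filter] using h2

lemma card_filter_le (l : List ℝ) (hs : l.Pairwise (· ≤ ·))
    (i : ℕ) (hi : i < l.length) (t : ℝ) (ht : t < l[i]'hi)
    [DecidablePred fun x : ℝ => x ∈ Set.Icc (0:ℝ) t] :
    Multiset.card ((↑l : Multiset ℝ).filter (fun x => x ∈ Set.Icc (0:ℝ) t)) ≤ i := by
  have key : l.countP (fun x => decide (x ∈ Set.Icc (0:ℝ) t)) ≤ i := by
    have hsplit : l.countP (fun x => decide (x ∈ Set.Icc (0:ℝ) t)) =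
        (l.take i).countP (fun x => decide (x ∈ Set.Icc (0:ℝ) t)) +
        (l.drop i).countP (fun x => decide (x ∈ Set.Icc (0:ℝ) t)) := by
      conv_lhs => rw [← List.take_append_drop i l]
      rw [List.countP_append]
    have hdrop : (l.drop i).countP (fun x => decide (x ∈ Set.Icc (0:ℝ) t)) = 0 := by
      apply List.countP_eq_zero.2
      intro a ha
      simp only [decide_eq_true_eq, Set.mem_Icc, not_and, not_le]
      intro _
      exact lt_of_lt_of_le ht (get_le_of_mem_drop l hs i hi a ha)
    have htake : (l.take i).countP (fun x => decide (x ∈ Set.Icc (0:ℝ) t)) ≤ i :=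
      le_trans (List.countP_le_length) (by rw [List.length_take]; omega)
    omega
  simpa [Multiset.filter_coe, List.countP_eq_length_filter] using key


lemma Finv_eq_get (l : List ℝ) (hs : l.Pairwise (· ≤ ·)) (h₁ : ∀ a ∈ l, 0 ≤ a)
    (m : ℕ) (hm : l.length = m) (i : ℕ) (hi : i < m) (u : ℝ)
    (hu1 : (i:ℝ)/m < u) (hu2 : u ≤ ((i:ℝ)+1)/m) :
    Finv ↑l m u = l[i]'(by omega) := by
  classical
  have hil : i < l.length := by omega
  have hmr : (0:ℝ) < m := by exact_mod_cast (show 0 < m by omega)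
  have hmemA : l[i]'hil ∈ {s : ℝ | 0 ≤ s ∧ u ≤ Fcdf ↑l m s} := by
    refine ⟨h₁ _ (List.getElem_mem hil), ?_⟩
    have hle := card_filter_ge l hs h₁ i hil (l[i]'hil) le_rfl
    rw [Fcdf]
    refine le_trans hu2 ?_
    rw [div_le_div_iff₀ hmr hmr]
    have : ((i:ℝ)+1) ≤ Multiset.card ((↑l : Multiset ℝ).filter
        (fun x => x ∈ Set.Icc (0:ℝ) (l[i]'hil))) := by exact_mod_cast hle
    nlinarith
  have hlbA : ∀ s ∈ {s : ℝ | 0 ≤ s ∧ u ≤ Fcdf ↑l m s}, l[i]'hil ≤ s := by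
    rintro s ⟨hs0, hsu⟩
    by_contra hlt
    push_neg at hlt
    have hcle := card_filter_le l hs i hil s hlt
    rw [Fcdf] at hsu
    have hc : (Multiset.card ((↑l : Multiset ℝ).filter
        (fun x => x ∈ Set.Icc (0:ℝ) s)) : ℝ) ≤ (i:ℝ) := by exact_mod_cast hcle
    have : u ≤ (i:ℝ)/m := le_trans hsu (by gcongr)
    linarith
  exact le_antisymm (csInf_le ⟨_, hlbA⟩ hmemA) (le_csInf ⟨_, hmemA⟩ hlbA)

lemma quantile_integral (l₁ l₂ : List ℝ) (m : ℕ) (hm : 0 < m)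
    (hl1 : l₁.length = m) (hl2 : l₂.length = m)
    (s₁ : l₁.Pairwise (· ≤ ·)) (s₂ : l₂.Pairwise (· ≤ ·))
    (h₁ : ∀ a ∈ l₁, 0 ≤ a) (h₂ : ∀ a ∈ l₂, 0 ≤ a) :
    ∫ u in Set.Ioo (0:ℝ) 1, |Finv ↑l₁ m u - Finv ↑l₂ m u|
      = ∑ k ∈ Finset.range m, (if hk : k < m then
          |l₁[k]'(by omega) - l₂[k]'(by omega)| / m else 0) := by
  set f : ℝ → ℝ := fun u => |Finv ↑l₁ m u - Finv ↑l₂ m u| with hf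
  have hmr : (0:ℝ) < m := by exact_mod_cast hm
  have hconst : ∀ k : ℕ, ∀ _hk : k < m, ∀ u ∈ Set.Ioc ((k:ℝ)/m) (((k:ℝ)+1)/m),
      f u = |l₁[k]'(by omega) - l₂[k]'(by omega)| := by
    intro k hk u hu
    rw [hf]
    simp only []
    rw [Finv_eq_get l₁ s₁ h₁ m hl1 k hk u hu.1 hu.2,
      Finv_eq_get l₂ s₂ h₂ m hl2 k hk u hu.1 hu.2]
  have hstep : ∀ k : ℕ, (k:ℝ)/m ≤ ((k:ℝ)+1)/m := by
    intro k; gcongr; linarith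
  have hpiece : ∀ k : ℕ, ∀ _hk : k < m, ∫ u in ((k:ℝ)/m)..(((k:ℝ)+1)/m), f u
      = (if hk : k < m then |l₁[k]'(by omega) - l₂[k]'(by omega)| / m else 0) := by
    intro k hk
    rw [dif_pos hk, intervalIntegral.integral_of_le (hstep k),
      MeasureTheory.setIntegral_congr_fun measurableSet_Ioc (hconst k hk),
      MeasureTheory.setIntegral_const, Real.volume_real_Ioc,
      max_eq_left (by linarith [hstep k]), smul_eq_mul]
    field_simp
    ring
  have hii : ∀ k, k < m → IntervalIntegrable f volume ((k:ℝ)/m) (((k:ℝ)+1)/m) := by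
    intro k hk
    rw [intervalIntegrable_iff_integrableOn_Ioc_of_le (hstep k)]
    exact (MeasureTheory.integrableOn_const measure_Ioc_lt_top.ne).congr_fun
      (fun u hu => (hconst k hk u hu).symm) measurableSet_Ioc
  have hsum := intervalIntegral.sum_integral_adjacent_intervals
    (a := fun k : ℕ => (k:ℝ)/m) (f := f) (μ := volume) (n := m)
    (fun k hk => by
      have := hii k hk
      simpa [Nat.cast_add, add_div] using this)
  simp only [Nat.cast_zero, zero_div, div_self (ne_of_gt hmr)] at hsum
  have hIoo : ∫ u in Set.Ioo (0:ℝ) 1, f u = ∫ u in (0:ℝ)..1, f u := by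
    rw [intervalIntegral.integral_of_le (by norm_num : (0:ℝ) ≤ 1),
      MeasureTheory.integral_Ioc_eq_integral_Ioo]
  rw [hIoo, ← hsum]
  refine Finset.sum_congr rfl fun k hk => ?_
  have hk' := Finset.mem_range.1 hk
  rw [← hpiece k hk']
  norm_num [add_div]

lemma sum_glue (L₁ L₂ : List ℝ) (m : ℕ) (h1 : L₁.length = m) (h2 : L₂.length = m) :
    ∑ k ∈ Finset.range m, (if hk : k < m then |L₁[k]'(by omega) - L₂[k]'(by omega)| else 0)
      = ∑ i : Fin L₁.length,
          |L₁.get i - L₂.get (Fin.cast (show L₁.length = L₂.length by omega) i)| := by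
  subst h1
  rw [← Fin.sum_univ_eq_sum_range]
  apply Finset.sum_congr rfl
  intro i _
  rw [dif_pos i.2]
  rfl



/-- For `S = [0,T]` with the Euclidean metric and `s_α = T + α`,
and counting measures `μ₁ = ∑_{i=1}^n δ_{x_i}`, `μ₂ = ∑_{i=1}^m δ_{y_i}` with `n ≤ m`,
letting `μ₁* = μ₁ + ∑_{i=n+1}^m δ_{s_α}`, the distance `D₁(μ₁, μ₂)` equals
`m ∫₀¹ |F_{μ₁*}⁻¹(u) − F_{μ₂}⁻¹(u)| du` and also `m ∫₀^∞ |F_{μ₁*}(x) − F_{μ₂}(x)| dx`. -/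
theorem stmt1 (T α : ℝ) (hT : 0 ≤ T) (hα : 0 < α) (n m : ℕ) (hnm : n ≤ m)
    (x : Fin n → ℝ) (y : Fin m → ℝ)
    (hx : ∀ i, x i ∈ Set.Icc 0 T) (hy : ∀ i, y i ∈ Set.Icc 0 T) :
    D1 (T + α) (↑(List.ofFn x) : Multiset ℝ) (↑(List.ofFn y) : Multiset ℝ) =
      m * ∫ u in Set.Ioo (0:ℝ) 1,
        |Finv ((↑(List.ofFn x) : Multiset ℝ) + Multiset.replicate (m - n) (T + α)) m u -
          Finv (↑(List.ofFn y) : Multiset ℝ) m u| ∧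
    D1 (T + α) (↑(List.ofFn x) : Multiset ℝ) (↑(List.ofFn y) : Multiset ℝ) =
      m * ∫ t in Set.Ioi (0:ℝ),
        |Fcdf ((↑(List.ofFn x) : Multiset ℝ) + Multiset.replicate (m - n) (T + α)) m t -
          Fcdf (↑(List.ofFn y) : Multiset ℝ) m t| := by
  
  set μ₁ : Multiset ℝ := ↑(List.ofFn x) with hμ₁
  set ν : Multiset ℝ := ↑(List.ofFn y) with hν
  set μ : Multiset ℝ := μ₁ + Multiset.replicate (m - n) (T + α) with hμ
  have hcard₁ : Multiset.card μ₁ = n := by simp [hμ₁]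
  have hcardν : Multiset.card ν = m := by simp [hν]
  have hcardμ : Multiset.card μ = m := by
    simp [hμ, hcard₁, Multiset.card_replicate]
    omega
  have hD1 : D1 (T + α) μ₁ ν = Dw μ ν := by
    rw [D1, hcard₁, hcardν, Nat.sub_eq_zero_of_le hnm, Multiset.replicate_zero, add_zero]
  have hμpos : ∀ a ∈ μ, 0 ≤ a := by
    intro a ha
    rcases Multiset.mem_add.1 ha with h | h
    · obtain ⟨i, rfl⟩ := (List.mem_ofFn (f := x) (a := a)).1 (Multiset.mem_coe.1 h)
      exact (hx i).1
    · rw [Multiset.eq_of_mem_replicate h]; linarith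
  have hνpos : ∀ a ∈ ν, 0 ≤ a := by
    intro a ha
    obtain ⟨i, rfl⟩ := (List.mem_ofFn (f := y) (a := a)).1 (Multiset.mem_coe.1 ha)
    exact (hy i).1
  rcases Nat.eq_zero_or_pos m with hm0 | hm
  · have hn0 : n = 0 := by omega
    have hμ0 : μ = 0 := by
      rw [← Multiset.card_eq_zero, hcardμ, hm0]
    have hν0 : ν = 0 := by
      rw [← Multiset.card_eq_zero, hcardν, hm0]
    have hDw0 : Dw μ ν = 0 := by
      rw [hμ0, hν0, Dw]
      have : { r : ℝ | ∃ l₁ l₂ : List ℝ, (l₁ : Multiset ℝ) = 0 ∧ (l₂ : Multiset ℝ) = 0 ∧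
          r = pairCost l₁ l₂ } = {0} := by
        ext r
        simp only [Set.mem_setOf_eq, Set.mem_singleton_iff]
        constructor
        · rintro ⟨l₁, l₂, e₁, e₂, rfl⟩
          rw [Multiset.coe_eq_zero] at e₁ e₂
          subst e₁; subst e₂
          simp [pairCost]
        · rintro rfl
          exact ⟨[], [], rfl, rfl, by simp [pairCost]⟩
      rw [this, csInf_singleton]
    rw [hD1, hDw0, hm0]
    norm_num
  · have hDw : Dw μ ν = ∫ t in Set.Ioi (0:ℝ), |Sfun μ t - Sfun ν t| :=
      Dw_eq μ ν (by rw [hcardμ, hcardν]) hμpos hνpos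
    constructor
    · -- quantile part
      set L₁ := μ.sort (· ≤ ·) with hL₁
      set L₂ := ν.sort (· ≤ ·) with hL₂
      have e₁ : (↑L₁ : Multiset ℝ) = μ := μ.sort_eq _
      have e₂ : (↑L₂ : Multiset ℝ) = ν := ν.sort_eq _
      have hlen₁ : L₁.length = m := by rw [← Multiset.coe_card, e₁, hcardμ]
      have hlen₂ : L₂.length = m := by rw [← Multiset.coe_card, e₂, hcardν]
      have hlen : L₁.length = L₂.length := by omega
      have hq := quantile_integral L₁ L₂ m hm hlen₁ hlen₂ (μ.pairwise_sort _) (ν.pairwise_sort _)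
        (fun a ha => hμpos a (e₁ ▸ Multiset.mem_coe.2 ha))
        (fun a ha => hνpos a (e₂ ▸ Multiset.mem_coe.2 ha))
      rw [e₁, e₂] at hq
      rw [hD1, hDw, ← e₁, ← e₂, ← pairCost_sorted_eq L₁ L₂ hlen (μ.pairwise_sort _) (ν.pairwise_sort _)
        (fun a ha => hμpos a (e₁ ▸ Multiset.mem_coe.2 ha))
        (fun a ha => hνpos a (e₂ ▸ Multiset.mem_coe.2 ha))]
      rw [show Finv (↑L₁) m = Finv μ m by rw [e₁], show Finv (↑L₂) m = Finv ν m by rw [e₂]]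
      rw [hq, Finset.mul_sum]
      rw [pairCost_eq L₁ L₂ hlen, ← sum_glue L₁ L₂ m hlen₁ hlen₂]
      apply Finset.sum_congr rfl
      intro k hk
      have hk' := Finset.mem_range.1 hk
      rw [dif_pos hk', dif_pos hk']
      field_simp
    · rw [hD1, hDw, integral_Sfun_eq μ ν m hm hcardμ hcardν hμpos hνpos]
end
end
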